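/- For each integer r ≥ 2, the monoid M_r = ℤ₊(1,1,…,1) + Σ_{j=1}^r ℤ₊(r·e_j) ⊆ ℤ₊^r (where e_j is the j-th standard basis vector of ℤ^r) is a normal affine monoid. -/

import Mathlib

open scoped NNReal
noncomputable section

/-- Real image of an integer vector. -/
def toR {r : ℕ} (v : Fin r → ℤ) : Fin r → ℝ := fun i => (v i : ℝ)

/-- The group of differences of a submonoid of an abelian group. -/
def gp {G : Type*} [AddCommGroup G] (M : AddSubmonoid G) : AddSubgroup G :=
  AddSubgroup.closure (M : Set G)

/-- `M` is normal: `c • x ∈ M` for `x ∈ gp M`, `c ≥ 1` implies `x ∈ M`. -/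
def IsNormalMonoid {G : Type*} [AddCommGroup G] (M : AddSubmonoid G) : Prop :=
  ∀ (c : ℕ) (x : G), 0 < c → x ∈ gp M → (c : ℤ) • x ∈ M → x ∈ M

/-- `M` is positive: no nontrivial units. -/
def IsPositiveMonoid {G : Type*} [AddCommGroup G] (M : AddSubmonoid G) : Prop :=
  ∀ x ∈ M, -x ∈ M → x = 0

/-- The cone `ℝ₊M ⊆ ℝ^r` spanned by a submonoid `M ⊆ ℤ^r`. -/
def coneM {r : ℕ} (M : AddSubmonoid (Fin r → ℤ)) : Set (Fin r → ℝ) :=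
  (Submodule.span ℝ≥0 (toR '' (M : Set (Fin r → ℤ))) : Submodule ℝ≥0 (Fin r → ℝ))

/-- The distinguished vector `e = (1,0) ∈ ℤ ⊕ ℤ^r`. -/
def eVec (r : ℕ) : ℤ × (Fin r → ℤ) := (1, 0)

/-- `M_i = (ℝ ⊕ ℝ₊M) ∩ (ℤ(x₁ - ie) + ⋯ + ℤ(x_r - ie))`, with `x_j - ie = (-i, x_j)`. -/
def Mi {r : ℕ} (M : AddSubmonoid (Fin r → ℤ)) (x : Fin r → (Fin r → ℤ)) (i : ℕ) :
    Set (ℤ × (Fin r → ℤ)) :=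
  {p | p ∈ AddSubgroup.closure (Set.range fun j => ((-(i : ℤ), x j) : ℤ × (Fin r → ℤ))) ∧
       toR p.2 ∈ coneM M}

/-- The submonoid (as a set) `ℤ₊e + M_i`. -/
def ZeMi {r : ℕ} (M : AddSubmonoid (Fin r → ℤ)) (x : Fin r → (Fin r → ℤ)) (i : ℕ) :
    Set (ℤ × (Fin r → ℤ)) :=
  {p | ∃ (z : ℕ) (m : ℤ × (Fin r → ℤ)), m ∈ Mi M x i ∧ p = (z : ℤ) • eVec r + m}

/-- The monoid `M_r = ℤ₊(1,…,1) + Σ_j ℤ₊(r·e_j) ⊆ ℤ₊^r`. -/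
def Mr (r : ℕ) : AddSubmonoid (Fin r → ℤ) :=
  AddSubmonoid.closure
    ({fun _ => 1} ∪ Set.range fun j : Fin r => (r : ℤ) • Pi.single j (1 : ℤ))

lemma mem_Mr_iff {r : ℕ} (hr : 0 < r) (x : Fin r → ℤ) :
    x ∈ Mr r ↔ (∀ j, 0 ≤ x j) ∧ ∀ i j, (r : ℤ) ∣ x i - x j := by
  constructor
  · intro hx
    induction hx using AddSubmonoid.closure_induction with
    | mem y hy =>
      rcases hy with h1 | ⟨j, rfl⟩
      · simp only [Set.mem_singleton_iff] at h1; subst h1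
        exact ⟨fun _ => zero_le_one, fun i j => by simp⟩
      · constructor
        · intro k
          by_cases h : k = j <;> simp [Pi.single_apply, h]
        · intro i k
          by_cases hi : i = j <;> by_cases hk : k = j <;>
            simp [Pi.single_apply, hi, hk]
    | zero => exact ⟨fun _ => le_refl 0, fun i j => by simp⟩
    | add a b _ _ ha hb =>
      refine ⟨fun j => add_nonneg (ha.1 j) (hb.1 j), fun i j => ?_⟩
      have : a i + b i - (a j + b j) = (a i - a j) + (b i - b j) := by ring
      rw [Pi.add_apply, Pi.add_apply, this]
      exact dvd_add (ha.2 i j) (hb.2 i j)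
  · rintro ⟨h1, h2⟩
    set j0 : Fin r := ⟨0, hr⟩
    set a : ℤ := x j0 % r with ha
    have hmod : ∀ j, x j % r = a := by
      intro j
      exact Int.modEq_iff_dvd.mpr (h2 j0 j)
    have hxj : ∀ j, x j = a + (r : ℤ) * (x j / r) := by
      intro j
      have := Int.emod_add_mul_ediv (x j) r
      rw [hmod j] at this; omega
    have hdiv : ∀ j, 0 ≤ x j / r := fun j =>
      Int.ediv_nonneg (h1 j) (by exact_mod_cast hr.le)
    have ha0 : 0 ≤ a := Int.emod_nonneg _ (by exact_mod_cast hr.ne')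
    have hx : x = a.toNat • (fun _ => (1:ℤ)) +
        ∑ j : Fin r, (x j / r).toNat • ((r : ℤ) • Pi.single j (1:ℤ)) := by
      funext k
      have hsum : ∑ j : Fin r, ((x j / r).toNat • ((r : ℤ) • Pi.single j (1:ℤ))) k
          = ((x k / r).toNat : ℤ) * r := by
        rw [Finset.sum_eq_single k]
        · simp [mul_comm]
        · intro b _ hb; simp [Pi.single_apply, Ne.symm hb]
        · simp
      simp only [Pi.add_apply, Finset.sum_apply]
      rw [hsum]
      simp only [Pi.smul_apply, smul_eq_mul, mul_one, nsmul_eq_mul]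
      rw [Int.toNat_of_nonneg ha0, Int.toNat_of_nonneg (hdiv k)]
      linarith [hxj k]
    rw [hx]
    refine AddSubmonoid.add_mem _ (AddSubmonoid.nsmul_mem _ ?_ _)
      (AddSubmonoid.sum_mem _ fun j _ => AddSubmonoid.nsmul_mem _ ?_ _)
    · exact AddSubmonoid.subset_closure (Or.inl rfl)
    · exact AddSubmonoid.subset_closure (Or.inr ⟨j, rfl⟩)

lemma gp_Mr {r : ℕ} (hr : 0 < r) (x : Fin r → ℤ) (hx : x ∈ gp (Mr r)) :
    ∀ i j, (r : ℤ) ∣ x i - x j := by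
  induction hx using AddSubgroup.closure_induction with
  | mem y hy => exact ((mem_Mr_iff hr y).mp hy).2
  | zero => intro i j; simp
  | add a b _ _ ha hb =>
    intro i j
    have : (a + b) i - (a + b) j = (a i - a j) + (b i - b j) := by
      simp; ring
    rw [this]; exact dvd_add (ha i j) (hb i j)
  | neg a _ ha =>
    intro i j
    have : (-a) i - (-a) j = -(a i - a j) := by simp; ring
    rw [this]; exact (ha i j).neg_right

/-- for r ≥ 2, `M_r` is a normal affine monoid. -/
theorem statement10 (r : ℕ) (hr : 2 ≤ r) :
    (Mr r).FG ∧ IsNormalMonoid (Mr r) := by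
  have hr0 : 0 < r := by omega
  constructor
  · rw [AddSubmonoid.fg_iff]
    exact ⟨_, rfl, (Set.finite_singleton _).union (Set.finite_range _)⟩
  · intro c x hc hgp hcx
    rw [mem_Mr_iff hr0] at hcx ⊢
    refine ⟨fun j => ?_, gp_Mr hr0 x hgp⟩
    have := hcx.1 j
    simp only [Pi.smul_apply, smul_eq_mul] at this
    nlinarith [this, Int.natCast_pos.mpr hc]
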